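/- arXiv:1804.06485 — 3 statements merged into one kernel-verified Lean document; each statement's English description precedes it below -/
import Mathlib

section
/- Let C be a category, M and N monads on C, and φ : M ⟶ N a morphism of monads, and assume the restriction functor φ^* : Alg(N) → Alg(M) admits a left adjoint φ_! . If there exists an endofunctor X : C → C together with a natural isomorphism φ_! ⋙ U_N ≅ U_M ⋙ X of functors Alg(M) → C, then there is a natural isomorphism e : N ≅ X∘M of endofunctors of C which is compatible with the right M-actions, i.e. for every object c of C one has (N(φ_c) ≫ μ^N_c) ≫ e_c = e_{M(c)} ≫ X(μ^M_c); in particular N is a free right M-module generated by X. -/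
/-!
STATEMENT 1: If a morphism of monads `φ : M ⟶ N` (with `φ^*` admitting a left adjoint
`φ_!`) has the PBW property witnessed by an endofunctor `X` (i.e. there is a natural
isomorphism `φ_! ⋙ U_N ≅ U_M ⋙ X`), then there is a natural isomorphism
`e : N ≅ M ⋙ X` of endofunctors of `C` compatible with the right `M`-actions:
for every object `c`, `(N(φ_c) ≫ μ^N_c) ≫ e_c = e_{M(c)} ≫ X(μ^M_c)`.
In particular `N` is a free right `M`-module generated by `X`.
-/

open CategoryTheory

universe v u

/-- Any algebra morphism out of a free algebra is determined by its restriction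
along the unit. -/
lemma free_hom_f_eq {C : Type u} [Category.{v} C] (T : Monad C) {d : C}
    {B : Monad.Algebra T} (p : T.free.obj d ⟶ B) :
    p.f = T.map (T.η.app d ≫ p.f) ≫ B.a := by
  erw [Functor.map_comp, Category.assoc, p.h]
  have : (T.free.obj d).a = T.μ.app d := rfl
  erw [this, ← Category.assoc, Monad.right_unit, Category.id_comp]

theorem pbw_implies_free_right_module
    {C : Type u} [Category.{v} C] (M N : Monad C) (φ : M ⟶ N)
    (φ! : Monad.Algebra M ⥤ Monad.Algebra N)
    (adj : φ! ⊣ Monad.algebraFunctorOfMonadHom φ)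
    (X : C ⥤ C) (pbw : φ! ⋙ N.forget ≅ M.forget ⋙ X) :
    ∃ e : (N : C ⥤ C) ≅ (M : C ⥤ C) ⋙ X,
      ∀ c : C,
        (N.map (φ.app c) ≫ N.μ.app c) ≫ e.hom.app c =
          e.hom.app (M.obj c) ≫ X.map (M.μ.app c) := by
  let adj' : M.free ⋙ φ! ⊣ N.forget := M.adj.comp adj
  let i : N.free ≅ M.free ⋙ φ! := N.adj.leftAdjointUniq adj'
  -- the unit comparison
  have hunit : ∀ c : C, N.η.app c ≫ (i.hom.app c).f =
      M.η.app c ≫ (adj.unit.app (M.free.obj c)).f := by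
    intro c
    have h := Adjunction.unit_leftAdjointUniq_hom_app N.adj adj' c
    simp [adj'] at h
    exact h
  have h1 : ∀ c : C, (i.hom.app c).f =
      N.map (M.η.app c ≫ (adj.unit.app (M.free.obj c)).f) ≫
        (φ!.obj (M.free.obj c)).a := by
    intro c
    rw [free_hom_f_eq N (i.hom.app c), hunit c]
    rfl
  -- the key pointwise identity
  have hstar : ∀ c : C, φ.app c ≫ (i.hom.app c).f =
      (adj.unit.app (M.free.obj c)).f := by
    intro c
    have hnat1 : φ.app c ≫ N.map (M.η.app c) = M.map (M.η.app c) ≫ φ.app (M.obj c) :=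
      (φ.toNatTrans.naturality (M.η.app c)).symm
    have hnat2 : φ.app (M.obj c) ≫ N.map (adj.unit.app (M.free.obj c)).f =
        M.map (adj.unit.app (M.free.obj c)).f ≫ φ.app _ :=
      (φ.toNatTrans.naturality (adj.unit.app (M.free.obj c)).f).symm
    have huh : M.map (adj.unit.app (M.free.obj c)).f ≫
        φ.app (((Monad.algebraFunctorOfMonadHom φ).obj (φ!.obj (M.free.obj c))).A) ≫
          (φ!.obj (M.free.obj c)).a =
        M.μ.app c ≫ (adj.unit.app (M.free.obj c)).f :=
      (adj.unit.app (M.free.obj c)).h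
    erw [h1 c, Functor.map_comp, Category.assoc, reassoc_of% hnat1,
      reassoc_of% hnat2, Category.assoc, huh, Monad.right_unit_assoc]
  -- the natural isomorphism
  let e : (N : C ⥤ C) ≅ (M : C ⥤ C) ⋙ X :=
    NatIso.ofComponents
      (fun c => N.forget.mapIso (i.app c) ≪≫ pbw.app (M.free.obj c))
      (by
        intro c d f
        have ha : N.map f ≫ (i.hom.app d).f =
            (i.hom.app c).f ≫ (φ!.map (M.free.map f)).f :=
          congrArg Monad.Algebra.Hom.f (i.hom.naturality f)
        have hb := pbw.hom.naturality (M.free.map f)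
        dsimp at hb ⊢
        erw [← Category.assoc, ha, Category.assoc, hb, ← Category.assoc]
        exact rfl)
  refine ⟨e, fun c => ?_⟩
  have hgf : (M.adj.counit.app (M.free.obj c)).f = M.μ.app c := by
    simp
    exact rfl
  -- step A : the i-part commutes with the actions
  have hA : (N.map (φ.app c) ≫ N.μ.app c) ≫ (i.hom.app c).f =
      (i.hom.app (M.obj c)).f ≫ (φ!.map (M.adj.counit.app (M.free.obj c))).f := by
    have hih : N.map (i.hom.app c).f ≫ (φ!.obj (M.free.obj c)).a =
        N.μ.app c ≫ (i.hom.app c).f := (i.hom.app c).h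
    have lhs : (N.map (φ.app c) ≫ N.μ.app c) ≫ (i.hom.app c).f =
        N.map (adj.unit.app (M.free.obj c)).f ≫ (φ!.obj (M.free.obj c)).a := by
      erw [Category.assoc, ← hih, ← Category.assoc, ← Functor.map_comp, hstar c]
      exact rfl
    have hgh : N.map (φ!.map (M.adj.counit.app (M.free.obj c))).f ≫
        (φ!.obj (M.free.obj c)).a =
        (φ!.obj (M.free.obj (M.obj c))).a ≫
          (φ!.map (M.adj.counit.app (M.free.obj c))).f :=
      (φ!.map (M.adj.counit.app (M.free.obj c))).h
    have hunat : (adj.unit.app (M.free.obj (M.obj c))).f ≫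
        (φ!.map (M.adj.counit.app (M.free.obj c))).f =
        M.μ.app c ≫ (adj.unit.app (M.free.obj c)).f := by
      have h2 := congrArg Monad.Algebra.Hom.f
        (adj.unit.naturality (M.adj.counit.app (M.free.obj c)))
      simp only [Functor.id_map, Functor.comp_map, Monad.Algebra.comp_f,
        Monad.algebraFunctorOfMonadHom_map_f] at h2
      have h2' : (adj.unit.app (M.free.obj (M.obj c))).f ≫
          (φ!.map (M.adj.counit.app (M.free.obj c))).f =
          (M.adj.counit.app (M.free.obj c)).f ≫ (adj.unit.app (M.free.obj c)).f := h2.symm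
      erw [h2', hgf]
      exact rfl
    erw [lhs, h1 (M.obj c), Category.assoc, ← hgh, ← Category.assoc,
      ← Functor.map_comp, Category.assoc, hunat, ← Category.assoc,
      Monad.left_unit, Category.id_comp]
    exact rfl
  -- step B : naturality of pbw at the counit
  have hB : (φ!.map (M.adj.counit.app (M.free.obj c))).f ≫ pbw.hom.app (M.free.obj c) =
      pbw.hom.app (M.free.obj (M.obj c)) ≫ X.map (M.μ.app c) := by
    have h3 := pbw.hom.naturality (M.adj.counit.app (M.free.obj c))
    dsimp at h3
    rw [← hgf]
    exact h3
  have happ : ∀ d : C, e.hom.app d = (i.hom.app d).f ≫ pbw.hom.app (M.free.obj d) := by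
    intro d
    rfl
  erw [happ, happ, ← Category.assoc, hA, Category.assoc, hB, ← Category.assoc]
  exact rfl
end

section
/- Let C be a category, M and N monads on C, and φ : M ⟶ N a morphism of monads, and assume the restriction functor φ^* : Alg(N) → Alg(M) admits a left adjoint φ_! . If there exists an endofunctor X : C → C and a natural isomorphism e : N ≅ X∘M such that for every object c of C one has (N(φ_c) ≫ μ^N_c) ≫ e_c = e_{M(c)} ≫ X(μ^M_c), then there is a natural isomorphism φ_! ⋙ U_N ≅ U_M ⋙ X of functors Alg(M) → C; that is, for every M-algebra (c, γ) the underlying object of φ_!(c, γ) is isomorphic to X(c), naturally with respect to morphisms of M-algebras. -/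
/-!
STATEMENT 2: If a morphism of monads `φ : M ⟶ N` (with `φ^*` admitting a left adjoint
`φ_!`) is such that `N` is a free right `M`-module generated by an endofunctor `X`
(i.e. there is a natural isomorphism `e : N ≅ M ⋙ X` compatible with the right
`M`-actions), then there is a natural isomorphism `φ_! ⋙ U_N ≅ U_M ⋙ X` of functors
`Alg(M) ⥤ C`: the underlying object of `φ_!(c, γ)` is isomorphic to `X(c)`, naturally
with respect to morphisms of `M`-algebras.
-/

open CategoryTheory

universe v u

set_option linter.unusedSectionVars false

namespace PBWAux

variable {C : Type u} [Category.{v} C] (M N : Monad C)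
  (X : C ⥤ C) (e : (N : C ⥤ C) ≅ (M : C ⥤ C) ⋙ X)

/-- section `X c ⟶ N c` -/
def sm (c : C) : X.obj c ⟶ N.obj c := X.map (M.η.app c) ≫ e.inv.app c

/-- retraction `N c ⟶ X c` for an algebra -/
def qm (A : Monad.Algebra M) : N.obj A.A ⟶ X.obj A.A := e.hom.app A.A ≫ X.map A.a

lemma einv_nat {c d : C} (h : c ⟶ d) :
    X.map (M.map h) ≫ e.inv.app d = e.inv.app c ≫ N.map h := by
  have := e.inv.naturality h; dsimp at this; rw [this]

lemma ehom_nat {c d : C} (h : c ⟶ d) :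
    N.map h ≫ e.hom.app d = e.hom.app c ≫ X.map (M.map h) := by
  have := e.hom.naturality h; dsimp at this; rw [this]

lemma sm_nat {c d : C} (h : c ⟶ d) :
    X.map h ≫ sm M N X e d = sm M N X e c ≫ N.map h := by
  have h0 : h ≫ M.η.app d = M.η.app c ≫ M.map h := by
    have := M.η.naturality h; dsimp at this; rw [this]
  simp only [sm]
  rw [← Category.assoc, ← X.map_comp, h0, X.map_comp, Category.assoc,
    einv_nat M N X e h, Category.assoc]

lemma qm_nat {A B : Monad.Algebra M} (f : A ⟶ B) :
    qm M N X e A ≫ X.map f.f = N.map f.f ≫ qm M N X e B := by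
  simp only [qm]
  rw [Category.assoc, ← X.map_comp, ← f.h, X.map_comp,
    reassoc_of% ehom_nat M N X e f.f]

lemma sq (A : Monad.Algebra M) : sm M N X e A.A ≫ qm M N X e A = 𝟙 _ := by
  simp only [sm, qm]
  rw [Category.assoc, Iso.inv_hom_id_app_assoc, ← X.map_comp, A.unit, X.map_id]

variable (φ : M ⟶ N)
variable (compat : ∀ c : C,
      (N.map (φ.app c) ≫ N.μ.app c) ≫ e.hom.app c =
        e.hom.app (M.obj c) ≫ X.map (M.μ.app c))

section
include compat

lemma r_eq (c : C) : N.map (φ.app c) ≫ N.μ.app c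
    = e.hom.app (M.obj c) ≫ X.map (M.μ.app c) ≫ e.inv.app c := by
  rw [← Category.assoc, ← compat c]
  simp

lemma sm_r (c : C) :
    sm M N X e (M.obj c) ≫ N.map (φ.app c) ≫ N.μ.app c = e.inv.app c := by
  rw [r_eq M N X e φ compat c]
  simp only [sm]
  rw [Category.assoc, Iso.inv_hom_id_app_assoc, ← Category.assoc, ← X.map_comp,
    M.left_unit]
  simp

end

lemma qs (A : Monad.Algebra M) :
    qm M N X e A ≫ sm M N X e A.A
      = e.hom.app A.A ≫ sm M N X e (M.obj A.A) ≫ N.map A.a := by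
  simp only [qm, sm]
  have h1 : A.a ≫ M.η.app A.A = M.η.app (M.obj A.A) ≫ M.map A.a := by
    have := M.η.naturality A.a; dsimp at this; rw [this]
  rw [Category.assoc, ← Category.assoc (X.map A.a), ← X.map_comp, h1, X.map_comp,
    Category.assoc, einv_nat M N X e A.a]
  simp

include compat in
lemma claimA (A : Monad.Algebra M) :
    N.map A.a ≫ qm M N X e A
      = (N.map (φ.app A.A) ≫ N.μ.app A.A) ≫ qm M N X e A := by
  simp only [qm]
  rw [reassoc_of% ehom_nat M N X e A.a, ← X.map_comp, ← A.assoc, X.map_comp]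
  simp only [Category.assoc]
  rw [reassoc_of% compat A.A]

/-- the N-action on `X c` -/
def act (A : Monad.Algebra M) : N.obj (X.obj A.A) ⟶ X.obj A.A :=
  N.map (sm M N X e A.A) ≫ N.μ.app A.A ≫ qm M N X e A

include compat in
lemma star (A : Monad.Algebra M) :
    N.map (qm M N X e A) ≫ act M N X e A = N.μ.app A.A ≫ qm M N X e A := by
  simp only [act]
  rw [← Category.assoc, ← N.map_comp, qs M N X e A]
  have hμa : N.map (N.map A.a) ≫ N.μ.app A.A
      = N.μ.app (M.obj A.A) ≫ N.map A.a := by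
    have := N.μ.naturality A.a; dsimp at this; rw [this]
  have hμφ : N.μ.app (M.obj A.A) ≫ N.map (φ.app A.A)
      = N.map (N.map (φ.app A.A)) ≫ N.μ.app (N.obj A.A) := by
    have := N.μ.naturality (φ.app A.A); dsimp at this; rw [this]
  rw [N.map_comp, N.map_comp]
  simp only [Category.assoc]
  slice_lhs 3 4 => rw [hμa]
  simp only [Category.assoc]
  rw [claimA M N X e φ compat A]
  simp only [Category.assoc]
  slice_lhs 3 4 => rw [hμφ]
  slice_lhs 4 5 => rw [← N.assoc]
  slice_lhs 2 4 => rw [← N.map_comp, ← N.map_comp, sm_r M N X e φ compat A.A]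
  simp only [Category.assoc]
  rw [← Functor.map_comp_assoc, Iso.hom_inv_id_app]
  simp

lemma act_unit (A : Monad.Algebra M) :
    N.η.app (X.obj A.A) ≫ act M N X e A = 𝟙 _ := by
  simp only [act]
  have h : sm M N X e A.A ≫ N.η.app (N.obj A.A)
      = N.η.app (X.obj A.A) ≫ N.map (sm M N X e A.A) := by
    have := N.η.naturality (sm M N X e A.A); dsimp at this; rw [this]
  rw [← Category.assoc, ← h, Category.assoc, N.left_unit_assoc]
  exact sq M N X e A

include compat in
lemma act_assoc (A : Monad.Algebra M) :
    N.μ.app (X.obj A.A) ≫ act M N X e A = N.map (act M N X e A) ≫ act M N X e A := by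
  have star' : N.map (qm M N X e A) ≫ N.map (sm M N X e A.A) ≫ N.μ.app A.A ≫ qm M N X e A
      = N.μ.app A.A ≫ qm M N X e A := by
    have := star M N X e φ compat A
    simpa only [act, Category.assoc] using this
  have hμ : N.map (N.map (sm M N X e A.A)) ≫ N.μ.app (N.obj A.A)
      = N.μ.app (X.obj A.A) ≫ N.map (sm M N X e A.A) := by
    have := N.μ.naturality (sm M N X e A.A); dsimp at this; rw [this]
  conv_rhs => rw [act]
  rw [N.map_comp, N.map_comp]
  simp only [Category.assoc]
  rw [star']
  slice_rhs 2 3 => rw [N.assoc]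
  slice_rhs 1 2 => rw [hμ]
  simp only [act, Category.assoc]


include compat in
lemma act_hom {A B : Monad.Algebra M} (f : A ⟶ B) :
    N.map (X.map f.f) ≫ act M N X e B = act M N X e A ≫ X.map f.f := by
  simp only [act]
  rw [← Category.assoc, ← N.map_comp, sm_nat M N X e f.f, N.map_comp]
  have hμ : N.map (N.map f.f) ≫ N.μ.app B.A = N.μ.app A.A ≫ N.map f.f := by
    have := N.μ.naturality f.f; dsimp at this; rw [this]
  simp only [Category.assoc]
  rw [reassoc_of% hμ, ← qm_nat M N X e f]

/-- The explicit left adjoint. -/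
def Lfun : Monad.Algebra M ⥤ Monad.Algebra N where
  obj A :=
    { A := X.obj A.A
      a := act M N X e A
      unit := act_unit M N X e A
      assoc := act_assoc M N X e φ compat A }
  map f :=
    { f := X.map f.f
      h := act_hom M N X e φ compat f }
  map_id A := by ext; dsimp; simp
  map_comp f g := by ext; dsimp; simp

include compat in
lemma hNu (A : Monad.Algebra M) :
    N.map (N.η.app A.A ≫ qm M N X e A) ≫ act M N X e A = qm M N X e A := by
  rw [N.map_comp, Category.assoc, star M N X e φ compat A]
  simp

include compat in
lemma qsB (B : Monad.Algebra N) :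
    qm M N X e ((Monad.algebraFunctorOfMonadHom φ).obj B) ≫ sm M N X e B.A ≫ B.a
      = B.a := by
  have h : (e.hom.app B.A ≫ X.map (φ.app B.A ≫ B.a)) ≫ sm M N X e B.A
      = e.hom.app B.A ≫ sm M N X e (M.obj B.A) ≫ N.map (φ.app B.A ≫ B.a) :=
    qs M N X e ((Monad.algebraFunctorOfMonadHom φ).obj B)
  show (e.hom.app B.A ≫ X.map (φ.app B.A ≫ B.a)) ≫ sm M N X e B.A ≫ B.a = B.a
  rw [← Category.assoc, h]
  simp only [Functor.map_comp, Category.assoc]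
  rw [← B.assoc, reassoc_of% sm_r M N X e φ compat B.A]
  simp

/-- The adjunction between the explicit left adjoint and restriction. -/
def adj2 : Lfun M N X e φ compat ⊣ Monad.algebraFunctorOfMonadHom φ where
  unit :=
    { app := fun A =>
        { f := N.η.app A.A ≫ qm M N X e A
          h := by
            show M.map (N.η.app A.A ≫ qm M N X e A) ≫ φ.app (X.obj A.A) ≫ act M N X e A
              = A.a ≫ N.η.app A.A ≫ qm M N X e A
            have hφ : M.map (N.η.app A.A ≫ qm M N X e A) ≫ φ.app (X.obj A.A)
                = φ.app A.A ≫ N.map (N.η.app A.A ≫ qm M N X e A) := by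
              have := φ.toNatTrans.naturality (N.η.app A.A ≫ qm M N X e A)
              dsimp at this; rw [this]
            rw [← Category.assoc, hφ, Category.assoc, hNu M N X e φ compat A]
            have h1 : A.a ≫ N.η.app A.A = N.η.app (M.obj A.A) ≫ N.map A.a := by
              have := N.η.naturality A.a; dsimp at this; rw [this]
            rw [← Category.assoc, h1, Category.assoc, claimA M N X e φ compat A]
            have h2 : φ.app A.A ≫ N.η.app (N.obj A.A)
                = N.η.app (M.obj A.A) ≫ N.map (φ.app A.A) := by
              have := N.η.naturality (φ.app A.A); dsimp at this; rw [this]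
            simp only [Category.assoc]
            rw [← reassoc_of% h2]
            simp }
      naturality := by
        intro A B f
        ext
        show f.f ≫ N.η.app B.A ≫ qm M N X e B = (N.η.app A.A ≫ qm M N X e A) ≫ X.map f.f
        have h1 : f.f ≫ N.η.app B.A = N.η.app A.A ≫ N.map f.f := by
          have := N.η.naturality f.f; dsimp at this; rw [this]
        rw [← Category.assoc, h1, Category.assoc, ← qm_nat M N X e f,
          Category.assoc] }
  counit :=
    { app := fun B =>
        { f := sm M N X e B.A ≫ B.a
          h := by
            have hq : e.hom.app B.A ≫ X.map (φ.app B.A ≫ B.a) ≫ sm M N X e B.A ≫ B.a = B.a := by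
              rw [← Category.assoc]; exact qsB M N X e φ compat B
            show N.map (sm M N X e B.A ≫ B.a) ≫ B.a
              = (N.map (sm M N X e B.A) ≫ N.μ.app B.A ≫ (e.hom.app B.A ≫ X.map (φ.app B.A ≫ B.a))) ≫ sm M N X e B.A ≫ B.a
            rw [N.map_comp]
            simp only [Category.assoc]
            rw [← B.assoc, hq] }
      naturality := by
        intro B B' g
        ext
        show X.map g.f ≫ sm M N X e B'.A ≫ B'.a = (sm M N X e B.A ≫ B.a) ≫ g.f
        rw [← Category.assoc, sm_nat M N X e g.f, Category.assoc, g.h,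
          Category.assoc] }
  left_triangle_components A := by
    ext
    show X.map (N.η.app A.A ≫ qm M N X e A) ≫ sm M N X e (X.obj A.A) ≫ act M N X e A = 𝟙 (X.obj A.A)
    rw [← Category.assoc, sm_nat M N X e (N.η.app A.A ≫ qm M N X e A),
      Category.assoc, hNu M N X e φ compat A]
    exact sq M N X e A
  right_triangle_components B := by
    ext
    have hq : (e.hom.app B.A ≫ X.map (φ.app B.A ≫ B.a)) ≫ sm M N X e B.A ≫ B.a = B.a := qsB M N X e φ compat B
    show (N.η.app B.A ≫ (e.hom.app B.A ≫ X.map (φ.app B.A ≫ B.a))) ≫ sm M N X e B.A ≫ B.a = 𝟙 B.A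
    rw [Category.assoc, hq, B.unit]

end PBWAux

theorem free_right_module_implies_pbw
    {C : Type u} [Category.{v} C] (M N : Monad C) (φ : M ⟶ N)
    (φ! : Monad.Algebra M ⥤ Monad.Algebra N)
    (adj : φ! ⊣ Monad.algebraFunctorOfMonadHom φ)
    (X : C ⥤ C) (e : (N : C ⥤ C) ≅ (M : C ⥤ C) ⋙ X)
    (compat : ∀ c : C,
      (N.map (φ.app c) ≫ N.μ.app c) ≫ e.hom.app c =
        e.hom.app (M.obj c) ≫ X.map (M.μ.app c)) :
    Nonempty (φ! ⋙ N.forget ≅ M.forget ⋙ X) := by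
  refine ⟨(Functor.isoWhiskerRight (adj.leftAdjointUniq (PBWAux.adj2 M N X e φ compat))
    N.forget) ≪≫ ?_⟩
  exact NatIso.ofComponents (fun A => Iso.refl _)
    (by intro A B f; dsimp [PBWAux.Lfun]; exact (Category.comp_id _).trans (Category.id_comp _).symm)
end

section
/- Let k be a commutative ring and P a k-module equipped with two k-bilinear operations · and [−,−] such that for all a, b, c ∈ P: (i) (a · b) · c = a · (b · c); (ii) a · (b · c) = a · (c · b); (iii) [a, b · c] = [a, b] · c + [a, c] · b; (iv) [a · b, c] = [a, c] · b − a · [c, b]. Then for all a₁, a₂, a₃, a₄ ∈ P one has a₁ · ([a₂, a₄] · a₃) + a₁ · ([a₄, a₂] · a₃) = 0 (obtained by expanding [a₁ · a₂, a₃ · a₄] in two different ways). In particular, the right module over the Leibniz operad defined by these relations is not free. -/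
/-!
STATEMENT 12: Let `k` be a commutative ring and `P` a `k`-module with two `k`-bilinear
operations `·` (written `m`) and `[−,−]` (written `br`) such that `·` is associative
and right-permutative (`a · (b · c) = a · (c · b)`), and the mixed relations
`[a, b · c] = [a,b] · c + [a,c] · b` and `[a · b, c] = [a,c] · b − a · [c,b]` hold.
Then for all `a₁, a₂, a₃, a₄ ∈ P` one has
`a₁ · ([a₂,a₄] · a₃) + a₁ · ([a₄,a₂] · a₃) = 0`
(obtained by expanding `[a₁ · a₂, a₃ · a₄]` in two different ways); in particular the
right module over the Leibniz operad defined by these relations is not free.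
-/

theorem perm_leibniz_obstruction (k : Type*) [CommRing k] (P : Type*) [AddCommGroup P]
    [Module k P] (m br : P →ₗ[k] P →ₗ[k] P)
    (massoc : ∀ a b c : P, m (m a b) c = m a (m b c))
    (mperm : ∀ a b c : P, m a (m b c) = m a (m c b))
    (rel1 : ∀ a b c : P, br a (m b c) = m (br a b) c + m (br a c) b)
    (rel2 : ∀ a b c : P, br (m a b) c = m (br a c) b - m a (br c b)) :
    ∀ a₁ a₂ a₃ a₄ : P, m a₁ (m (br a₂ a₄) a₃) + m a₁ (m (br a₄ a₂) a₃) = 0 := by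
  intro a₁ a₂ a₃ a₄
  have e1 := rel2 a₁ a₂ (m a₃ a₄)
  have e2 := rel1 (m a₁ a₂) a₃ a₄
  rw [rel1 a₁ a₃ a₄, rel2 a₃ a₄ a₂] at e1
  rw [rel2 a₁ a₂ a₃, rel2 a₁ a₂ a₄] at e2
  simp only [map_add, map_sub, LinearMap.add_apply, LinearMap.sub_apply] at e1 e2
  have h := e1.symm.trans e2
  have k1 : m (m (br a₁ a₃) a₄) a₂ = m (m (br a₁ a₃) a₂) a₄ := by
    rw [massoc, massoc, mperm]
  have k2 : m (m (br a₁ a₄) a₃) a₂ = m (m (br a₁ a₄) a₂) a₃ := by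
    rw [massoc, massoc, mperm]
  have k3 : m (m a₁ (br a₃ a₂)) a₄ = m a₁ (m (br a₃ a₂) a₄) := massoc _ _ _
  have k4 : m (m a₁ (br a₄ a₂)) a₃ = m a₁ (m (br a₄ a₂) a₃) := massoc _ _ _
  have k5 : m a₁ (m a₃ (br a₂ a₄)) = m a₁ (m (br a₂ a₄) a₃) := mperm _ _ _
  rw [k1, k2, k3, k4, k5] at h
  -- h : A + B - C + D = (A - C') + (B - D')
  linear_combination (norm := module) h
end
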